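/- Unimodular decomposition of half-open simplicial cones: Let A be a nonsingular p × p integer matrix and J ⊆ [p]. Define R^+_J := ∏_{j∈[p]} R^+_{ε(j)} with ε(j) = 1 if j ∈ J and 0 otherwise, where R^+_0 = (0,∞), R^+_1 = [0,∞). Then there exist a finite set I, unimodular p × p integer matrices A_i (i.e., det A_i = ±1) for i ∈ I, and subsets J_i ⊆ [p], such that the indicator of the half-open cone A R^+_J decomposes as 1_{A R^+_J} = ∑_{i ∈ I} 1_{A_i R^+_{J_i}} pointwise on ℝ^p. -/

import Mathlib

/-- The half-open orthant `R^+_J = ∏_j R^+_{ε(j)}` with `R^+_1 = [0,∞)`, `R^+_0 = (0,∞)`. -/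
def RplusJ (p : ℕ) (J : Finset (Fin p)) : Set (Fin p → ℝ) :=
  {x | ∀ r, if r ∈ J then 0 ≤ x r else 0 < x r}

/-- The half-open simplicial cone `A R^+_J`. -/
def coneOf {p : ℕ} (A : Matrix (Fin p) (Fin p) ℤ) (J : Finset (Fin p)) :
    Set (Fin p → ℝ) :=
  (fun x => (A.map (Int.cast : ℤ → ℝ)).mulVec x) '' RplusJ p J

namespace S18

noncomputable def keyJ {p : ℕ} (J : Finset (Fin p)) (r : Fin p) : ℕ :=
  (if r ∈ J then p else 0) + (r : ℕ)

open Classical in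
/-- the openness pattern of the `k`-th subcone -/
noncomputable def Jk {p : ℕ} (J : Finset (Fin p)) (μ : Fin p → ℝ) (k : Fin p) :
    Finset (Fin p) :=
  Finset.univ.filter (fun r =>
    (¬ 0 < μ r ∧ r ∈ J) ∨ (0 < μ r ∧ keyJ J k < keyJ J r) ∨ (r = k ∧ k ∈ J))

/-- coordinate change of the `k`-th subcone -/
def Phi {p : ℕ} (μ : Fin p → ℝ) (k : Fin p) (s : Fin p → ℝ) : Fin p → ℝ :=
  fun r => if r = k then μ k * s k else s r + μ r * s k

variable {p : ℕ} {J : Finset (Fin p)} {μ : Fin p → ℝ}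

lemma keyJ_lt_of_not_mem {r r' : Fin p} (h : r ∉ J) (h' : r' ∈ J) :
    keyJ J r < keyJ J r' := by
  simp only [keyJ, if_neg h, if_pos h', zero_add]
  exact lt_of_lt_of_le r.isLt (Nat.le_add_right _ _)

lemma not_mem_of_keyJ_lt {k r : Fin p} (h : keyJ J k < keyJ J r) (hr : r ∉ J) : k ∉ J := by
  intro hk; exact absurd (keyJ_lt_of_not_mem hr hk) (by omega)

lemma keyJ_injective : Function.Injective (keyJ J) := by
  intro a b hab
  have ha := a.isLt; have hb := b.isLt
  unfold keyJ at hab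
  by_cases haJ : a ∈ J <;> by_cases hbJ : b ∈ J <;>
    simp only [if_pos, if_neg, haJ, hbJ, if_true, if_false] at hab <;>
    exact Fin.ext (by omega)

lemma keyJ_total {a b : Fin p} (h : a ≠ b) : keyJ J a < keyJ J b ∨ keyJ J b < keyJ J a := by
  rcases lt_trichotomy (keyJ J a) (keyJ J b) with h1 | h1 | h1
  · exact Or.inl h1
  · exact absurd (keyJ_injective h1) h
  · exact Or.inr h1

lemma mem_Jk_self (k : Fin p) : k ∈ Jk J μ k ↔ k ∈ J := by
  simp only [Jk, Finset.mem_filter, Finset.mem_univ, true_and]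
  constructor
  · rintro (⟨_, h⟩ | ⟨_, h⟩ | h)
    · exact h
    · exact absurd h (lt_irrefl _)
    · exact h
  · intro h; exact Or.inr (Or.inr h)

lemma mem_Jk_of_pos {r k : Fin p} (hrk : r ≠ k) (hμr : 0 < μ r) :
    r ∈ Jk J μ k ↔ keyJ J k < keyJ J r := by
  simp only [Jk, Finset.mem_filter, Finset.mem_univ, true_and]
  constructor
  · rintro (⟨h, _⟩ | ⟨_, h⟩ | ⟨h, _⟩)
    · exact absurd hμr h
    · exact h
    · exact absurd h hrk
  · intro h; exact Or.inr (Or.inl ⟨hμr, h⟩)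

lemma mem_Jk_of_npos {r k : Fin p} (hrk : r ≠ k) (hμr : ¬ 0 < μ r) :
    r ∈ Jk J μ k ↔ r ∈ J := by
  simp only [Jk, Finset.mem_filter, Finset.mem_univ, true_and]
  constructor
  · rintro (⟨_, h⟩ | ⟨h, _⟩ | ⟨h, _⟩)
    · exact h
    · exact absurd h hμr
    · exact absurd h hrk
  · intro h; exact Or.inl ⟨hμr, h⟩

lemma sk_nonneg {k : Fin p} {s : Fin p → ℝ} (hs : s ∈ RplusJ p (Jk J μ k)) : 0 ≤ s k := by
  have h := hs k
  by_cases hkJ : k ∈ J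
  · rw [if_pos ((mem_Jk_self k).mpr hkJ)] at h; exact h
  · rw [if_neg (fun hh => hkJ ((mem_Jk_self k).mp hh))] at h; exact le_of_lt h

lemma sk_pos {k : Fin p} {s : Fin p → ℝ} (hs : s ∈ RplusJ p (Jk J μ k)) (hkJ : k ∉ J) :
    0 < s k := by
  have h := hs k
  rw [if_neg (fun hh => hkJ ((mem_Jk_self k).mp hh))] at h; exact h

lemma core_fwd (hμ0 : ∀ r, 0 ≤ μ r) {k : Fin p} (hk : 0 < μ k)
    {s : Fin p → ℝ} (hs : s ∈ RplusJ p (Jk J μ k)) : Phi μ k s ∈ RplusJ p J := by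
  have hsk : 0 ≤ s k := sk_nonneg hs
  intro r
  by_cases hrk : r = k
  · subst hrk
    by_cases hrJ : r ∈ J
    · rw [if_pos hrJ]; simp only [Phi, if_pos rfl]
      exact mul_nonneg (le_of_lt hk) hsk
    · rw [if_neg hrJ]; simp only [Phi, if_pos rfl]
      exact mul_pos hk (sk_pos hs hrJ)
  · simp only [Phi, if_neg hrk]
    by_cases hμr : 0 < μ r
    · by_cases hrJ : r ∈ J
      · rw [if_pos hrJ]
        have hsr : 0 ≤ s r := by
          have h := hs r
          by_cases hm : r ∈ Jk J μ k
          · rw [if_pos hm] at h; exact h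
          · rw [if_neg hm] at h; exact le_of_lt h
        nlinarith [hμ0 r]
      · rw [if_neg hrJ]
        by_cases hm : r ∈ Jk J μ k
        · have hkey : keyJ J k < keyJ J r := (mem_Jk_of_pos hrk hμr).mp hm
          have hkJ : k ∉ J := not_mem_of_keyJ_lt hkey hrJ
          have hskpos : 0 < s k := sk_pos hs hkJ
          have hsr : 0 ≤ s r := by have h := hs r; rw [if_pos hm] at h; exact h
          nlinarith
        · have hsr : 0 < s r := by have h := hs r; rw [if_neg hm] at h; exact h
          nlinarith [hμ0 r]
    · have hμr0 : μ r = 0 := le_antisymm (not_lt.mp hμr) (hμ0 r)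
      rw [hμr0, zero_mul, add_zero]
      have hmem := mem_Jk_of_npos (J := J) hrk hμr
      by_cases hrJ : r ∈ J
      · rw [if_pos hrJ]; have h := hs r; rw [if_pos (hmem.mpr hrJ)] at h; exact h
      · rw [if_neg hrJ]; have h := hs r
        rw [if_neg (fun hh => hrJ (hmem.mp hh))] at h; exact h

open Classical in
lemma core_exists (hμ0 : ∀ r, 0 ≤ μ r) (hS : ∃ k, 0 < μ k)
    {t : Fin p → ℝ} (ht : t ∈ RplusJ p J) :
    ∃ k, 0 < μ k ∧ ∃ s ∈ RplusJ p (Jk J μ k), Phi μ k s = t := by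
  classical
  set S : Finset (Fin p) := Finset.univ.filter (fun r => 0 < μ r) with hSdef
  have hSne : S.Nonempty := by
    obtain ⟨k, hk⟩ := hS
    exact ⟨k, by simp [hSdef, hk]⟩
  have hmemS : ∀ r, r ∈ S ↔ 0 < μ r := by intro r; simp [hSdef]
  set q : Fin p → ℝ := fun r => t r / μ r with hq
  have himg : (S.image q).Nonempty := hSne.image q
  set m : ℝ := (S.image q).min' himg with hm
  have hmmem : m ∈ S.image q := (S.image q).min'_mem himg
  obtain ⟨k0, hk0S, hk0q⟩ := Finset.mem_image.mp hmmem
  set T : Finset (Fin p) := S.filter (fun r => q r = m) with hT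
  have hTne : T.Nonempty := ⟨k0, by simp [hT, hk0S, hk0q]⟩
  obtain ⟨k, hkT, hkmin⟩ := T.exists_min_image (keyJ J) hTne
  have hkS : k ∈ S := (Finset.mem_filter.mp hkT).1
  have hkq : q k = m := (Finset.mem_filter.mp hkT).2
  have hμk : 0 < μ k := (hmemS k).mp hkS
  have hmle : ∀ r, 0 < μ r → m ≤ q r := by
    intro r hr
    exact (S.image q).min'_le _ (Finset.mem_image_of_mem q ((hmemS r).mpr hr))
  have htnn : ∀ r, 0 ≤ t r := by
    intro r
    have h := ht r
    by_cases hrJ : r ∈ J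
    · rw [if_pos hrJ] at h; exact h
    · rw [if_neg hrJ] at h; exact le_of_lt h
  have hm0 : 0 ≤ m := by
    rw [← hkq, hq]
    exact div_nonneg (htnn k) (le_of_lt hμk)
  have htk : t k = μ k * m := by
    rw [← hkq, hq]; field_simp
  refine ⟨k, hμk, fun r => if r = k then m else t r - μ r * m, ?_, ?_⟩
  · intro r
    by_cases hrk : r = k
    · subst hrk
      simp only [if_pos rfl, eq_self_iff_true, if_true]
      by_cases hrJ : r ∈ J
      · rw [if_pos ((mem_Jk_self r).mpr hrJ)]; exact hm0
      · rw [if_neg (fun hh => hrJ ((mem_Jk_self r).mp hh))]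
        have h := ht r; rw [if_neg hrJ] at h
        have h2 : 0 < μ r * m := htk ▸ h
        nlinarith [hμ0 r]
    · simp only [if_neg hrk]
      by_cases hμr : 0 < μ r
      · have hle : μ r * m ≤ t r := by
          have := hmle r hμr
          rw [hq] at this
          calc μ r * m ≤ μ r * (t r / μ r) := by
                exact mul_le_mul_of_nonneg_left this (le_of_lt hμr)
            _ = t r := by field_simp
        by_cases hmem : r ∈ Jk J μ k
        · rw [if_pos hmem]; linarith
        · rw [if_neg hmem]
          have hkey : ¬ keyJ J k < keyJ J r := fun hh =>
            hmem ((mem_Jk_of_pos hrk hμr).mpr hh)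
          have hkey2 : keyJ J r < keyJ J k := by
            rcases keyJ_total (J := J) hrk with h | h
            · exact h
            · exact absurd h hkey
          have hrT : r ∉ T := fun hh => absurd (hkmin r hh) (by omega)
          have hrq : q r ≠ m := by
            intro hh; exact hrT (Finset.mem_filter.mpr ⟨(hmemS r).mpr hμr, hh⟩)
          have : m < q r := lt_of_le_of_ne (hmle r hμr) (Ne.symm hrq)
          have : μ r * m < t r := by
            calc μ r * m < μ r * q r := by
                  exact mul_lt_mul_of_pos_left this hμr
              _ = t r := by rw [hq]; field_simp
          linarith
      · have hμr0 : μ r = 0 := le_antisymm (not_lt.mp hμr) (hμ0 r)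
        rw [hμr0, zero_mul, sub_zero]
        have hmem := mem_Jk_of_npos (J := J) (μ := μ) hrk hμr
        have h := ht r
        by_cases hrJ : r ∈ J
        · rw [if_pos (hmem.mpr hrJ)]; rw [if_pos hrJ] at h; exact h
        · rw [if_neg (fun hh => hrJ (hmem.mp hh))]; rw [if_neg hrJ] at h; exact h
  · funext r
    by_cases hrk : r = k
    · subst hrk
      simp only [Phi, if_pos rfl]
      exact htk.symm
    · simp only [Phi, if_neg hrk, if_pos rfl, if_true]
      ring

lemma core_disjoint_aux (hμ0 : ∀ r, 0 ≤ μ r) {k k' : Fin p}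
    (hk : 0 < μ k) (hk' : 0 < μ k') (hne : k ≠ k') (hkey : keyJ J k < keyJ J k')
    {s s' : Fin p → ℝ} (hs : s ∈ RplusJ p (Jk J μ k)) (hs' : s' ∈ RplusJ p (Jk J μ k'))
    (heq : Phi μ k s = Phi μ k' s') : False := by
  have h1 : μ k * s k = s' k + μ k * s' k' := by
    have := congrFun heq k
    simpa [Phi, if_pos rfl, if_neg hne] using this
  have h2 : s k' + μ k' * s k = μ k' * s' k' := by
    have := congrFun heq k'
    simpa [Phi, if_pos rfl, if_neg (Ne.symm hne)] using this
  have hsk' : 0 ≤ s k' := by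
    have h := hs k'
    rw [if_pos ((mem_Jk_of_pos (Ne.symm hne) hk').mpr hkey)] at h
    exact h
  have hs'k : 0 < s' k := by
    have h := hs' k
    have : k ∉ Jk J μ k' := by
      intro hh
      have := (mem_Jk_of_pos hne hk).mp hh
      omega
    rw [if_neg this] at h
    exact h
  nlinarith

lemma core_disjoint (hμ0 : ∀ r, 0 ≤ μ r) {k k' : Fin p}
    (hk : 0 < μ k) (hk' : 0 < μ k')
    {s s' : Fin p → ℝ} (hs : s ∈ RplusJ p (Jk J μ k)) (hs' : s' ∈ RplusJ p (Jk J μ k'))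
    (heq : Phi μ k s = Phi μ k' s') : k = k' := by
  by_contra hne
  rcases keyJ_total (J := J) hne with h | h
  · exact core_disjoint_aux hμ0 hk hk' hne h hs hs' heq
  · exact core_disjoint_aux hμ0 hk' hk (Ne.symm hne) h hs' hs heq.symm


variable (A : Matrix (Fin p) (Fin p) ℤ)

lemma det_map : (A.map (Int.cast : ℤ → ℝ)).det = (A.det : ℝ) :=
  (RingHom.map_det (Int.castRingHom ℝ) A).symm

lemma mem_coneOf_iff (hA : A.det ≠ 0) (J : Finset (Fin p)) (x : Fin p → ℝ) :
    x ∈ coneOf A J ↔ (A.map (Int.cast : ℤ → ℝ))⁻¹.mulVec x ∈ RplusJ p J := by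
  set T := A.map (Int.cast : ℤ → ℝ) with hT
  have hdet : IsUnit T.det := by
    rw [det_map]
    exact isUnit_iff_ne_zero.mpr (by exact_mod_cast hA)
  constructor
  · rintro ⟨s, hs, rfl⟩
    rwa [Matrix.mulVec_mulVec, Matrix.nonsing_inv_mul T hdet, Matrix.one_mulVec]
  · intro h
    exact ⟨T⁻¹.mulVec x, h, by
      show T.mulVec (T⁻¹.mulVec x) = x
      rw [Matrix.mulVec_mulVec, Matrix.mul_nonsing_inv T hdet, Matrix.one_mulVec]⟩

variable {w : Fin p → ℤ} {μ : Fin p → ℝ}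

lemma mulVec_update (hμ : (A.map (Int.cast : ℤ → ℝ)).mulVec μ = (fun i => (w i : ℝ)))
    (k : Fin p) (s : Fin p → ℝ) :
    ((A.updateCol k w).map (Int.cast : ℤ → ℝ)).mulVec s
      = (A.map (Int.cast : ℤ → ℝ)).mulVec (Phi μ k s) := by
  set T := A.map (Int.cast : ℤ → ℝ) with hT
  funext i
  have hw : ∑ j, T i j * μ j = (w i : ℝ) := by
    have := congrFun hμ i
    simpa [Matrix.mulVec, dotProduct] using this
  have lhs : (((A.updateCol k w).map (Int.cast : ℤ → ℝ)).mulVec s) i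
      = ∑ j, (if j = k then (w i : ℝ) else T i j) * s j := by
    simp [Matrix.mulVec, dotProduct, Matrix.map_apply, Matrix.updateCol_apply, hT]
  have rhs : (T.mulVec (Phi μ k s)) i = ∑ j, T i j * (Phi μ k s j) := by
    simp [Matrix.mulVec, dotProduct]
  rw [lhs, rhs]
  have e1 : ∀ j, (if j = k then (w i : ℝ) else T i j) * s j
      = (if j = k then 0 else T i j * s j) + (if j = k then (w i : ℝ) * s k else 0) := by
    intro j; by_cases h : j = k <;> simp [h]
  have e2 : ∀ j, T i j * (Phi μ k s j)
      = (if j = k then 0 else T i j * s j) + T i j * μ j * s k := by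
    intro j; by_cases h : j = k <;> simp [Phi, h] <;> ring
  rw [Finset.sum_congr rfl (fun j _ => e1 j), Finset.sum_congr rfl (fun j _ => e2 j),
    Finset.sum_add_distrib, Finset.sum_add_distrib]
  congr 1
  rw [Finset.sum_ite_eq' Finset.univ k]
  simp only [Finset.mem_univ, if_pos]
  have : ∑ j, T i j * μ j * s k = (∑ j, T i j * μ j) * s k := by
    rw [Finset.sum_mul]
  rw [this, hw]

lemma det_update (hμ : (A.map (Int.cast : ℤ → ℝ)).mulVec μ = (fun i => (w i : ℝ)))
    (k : Fin p) : ((A.updateCol k w).det : ℝ) = μ k * (A.det : ℝ) := by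
  set T := A.map (Int.cast : ℤ → ℝ) with hT
  have h1 : ((A.updateCol k w).det : ℝ) = (T.updateCol k (fun i => (w i : ℝ))).det := by
    rw [← det_map, Matrix.map_updateCol]
    rfl
  have h2 : (fun i => (w i : ℝ)) = fun r => ∑ j, μ j • T r j := by
    rw [← hμ]
    funext r
    simp [Matrix.mulVec, dotProduct, smul_eq_mul, mul_comm]
  rw [h1, h2, Matrix.det_updateCol_sum, smul_eq_mul, det_map]

lemma exists_w (hA : A.det ≠ 0) (h2 : 2 ≤ A.det.natAbs) :
    ∃ (w : Fin p → ℤ) (μ : Fin p → ℝ),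
      (A.map (Int.cast : ℤ → ℝ)).mulVec μ = (fun i => (w i : ℝ)) ∧
      (∀ r, 0 ≤ μ r) ∧ (∀ r, μ r < 1) ∧ (∃ r, 0 < μ r) := by
  classical
  set T := A.map (Int.cast : ℤ → ℝ) with hT
  have hdet : IsUnit T.det := by
    rw [det_map]; exact isUnit_iff_ne_zero.mpr (by exact_mod_cast hA)
  -- there is an integer vector not in A ℤ^p
  have hu : ∃ u : Fin p → ℤ, ∀ c : Fin p → ℤ, A.mulVec c ≠ u := by
    by_contra hcon
    push_neg at hcon
    choose c hc using hcon
    set C : Matrix (Fin p) (Fin p) ℤ := Matrix.of (fun j i => c (Pi.single i 1) j) with hC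
    have hAC : A * C = 1 := by
      ext j i
      have := congrFun (hc (Pi.single i 1)) j
      simp only [Matrix.mulVec, dotProduct] at this
      simp only [Matrix.mul_apply, hC, Matrix.of_apply, Matrix.one_apply]
      rw [this, Pi.single_apply]
    have : A.det * C.det = 1 := by rw [← Matrix.det_mul, hAC, Matrix.det_one]
    have : IsUnit A.det := IsUnit.of_mul_eq_one _ this
    rw [Int.isUnit_iff] at this
    rcases this with h | h <;> rw [h] at h2 <;> simp at h2
  obtain ⟨u, hu⟩ := hu
  set t : Fin p → ℝ := T⁻¹.mulVec (fun i => (u i : ℝ)) with ht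
  set c : Fin p → ℤ := fun r => ⌊t r⌋ with hc
  set w : Fin p → ℤ := u - A.mulVec c with hw
  have hw0 : w ≠ 0 := by
    intro h
    exact hu c (by rw [← sub_eq_zero]; exact (neg_eq_zero.mp (by rw [← h, hw]; ring)))
  refine ⟨w, fun r => Int.fract (t r), ?_, fun r => Int.fract_nonneg _,
    fun r => Int.fract_lt_one _, ?_⟩
  · have hTt : T.mulVec t = fun i => (u i : ℝ) := by
      rw [ht, Matrix.mulVec_mulVec, Matrix.mul_nonsing_inv T hdet, Matrix.one_mulVec]
    have hcast : T.mulVec (fun r => (c r : ℝ)) = fun i => ((A.mulVec c) i : ℝ) := by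
      funext i
      exact (RingHom.map_mulVec (Int.castRingHom ℝ) A c i).symm
    have : (fun r => Int.fract (t r)) = t - fun r => (c r : ℝ) := by
      funext r
      simp only [Pi.sub_apply]
      rw [hc]
      exact rfl
    rw [this, Matrix.mulVec_sub, hTt, hcast]
    funext i
    have hwi : w i = u i - A.mulVec c i := by rw [hw]; rfl
    simp only [Pi.sub_apply, hwi]
    push_cast
    ring
  · by_contra hcon
    push_neg at hcon
    have hz : (fun r => Int.fract (t r)) = 0 := by
      funext r
      exact le_antisymm (hcon r) (Int.fract_nonneg _)
    -- then w = 0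
    apply hw0
    have hTt : T.mulVec t = fun i => (u i : ℝ) := by
      rw [ht, Matrix.mulVec_mulVec, Matrix.mul_nonsing_inv T hdet, Matrix.one_mulVec]
    have hfr : t = fun r => (c r : ℝ) := by
      funext r
      have := congrFun hz r
      simp only [Pi.zero_apply, Int.fract] at this
      have : t r - (⌊t r⌋ : ℝ) = 0 := this
      rw [hc]; linarith
    have hcast : T.mulVec (fun r => (c r : ℝ)) = fun i => ((A.mulVec c) i : ℝ) := by
      funext i
      exact (RingHom.map_mulVec (Int.castRingHom ℝ) A c i).symm
    have : (fun i => ((A.mulVec c) i : ℝ)) = fun i => (u i : ℝ) := by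
      rw [← hcast, ← hfr, hTt]
    have hAcu : A.mulVec c = u := by
      funext i
      exact_mod_cast congrFun this i
    rw [hw, hAcu, sub_self]


open Classical in
lemma step (hA : A.det ≠ 0) (J : Finset (Fin p))
    (hμ : (A.map (Int.cast : ℤ → ℝ)).mulVec μ = (fun i => (w i : ℝ)))
    (hμ0 : ∀ r, 0 ≤ μ r) (hS : ∃ r, 0 < μ r) (x : Fin p → ℝ) :
    Set.indicator (coneOf A J) (fun _ => (1 : ℝ)) x
      = ∑ k ∈ Finset.univ.filter (fun k => 0 < μ k),
          Set.indicator (coneOf (A.updateCol k w) (Jk J μ k)) (fun _ => (1 : ℝ)) x := by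
  classical
  set T := A.map (Int.cast : ℤ → ℝ) with hT
  have hdet : IsUnit T.det := by
    rw [hT, det_map]; exact isUnit_iff_ne_zero.mpr (by exact_mod_cast hA)
  set t := T⁻¹.mulVec x with htdef
  have hmemk : ∀ k : Fin p,
      (x ∈ coneOf (A.updateCol k w) (Jk J μ k) ↔
        ∃ s ∈ RplusJ p (Jk J μ k), Phi μ k s = t) := by
    intro k
    constructor
    · rintro ⟨s, hs, rfl⟩
      refine ⟨s, hs, ?_⟩
      show Phi μ k s = T⁻¹.mulVec (((A.updateCol k w).map (Int.cast : ℤ → ℝ)).mulVec s)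
      rw [mulVec_update A hμ k s, Matrix.mulVec_mulVec,
        Matrix.nonsing_inv_mul T hdet, Matrix.one_mulVec]
    · rintro ⟨s, hs, hPhi⟩
      refine ⟨s, hs, ?_⟩
      show ((A.updateCol k w).map (Int.cast : ℤ → ℝ)).mulVec s = x
      rw [mulVec_update A hμ k s, hPhi, htdef, Matrix.mulVec_mulVec,
        Matrix.mul_nonsing_inv T hdet, Matrix.one_mulVec]
  by_cases ht : t ∈ RplusJ p J
  · obtain ⟨k0, hk0, s0, hs0, hPhi0⟩ := core_exists hμ0 hS ht
    rw [Set.indicator_of_mem ((mem_coneOf_iff A hA J x).mpr ht)]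
    rw [Finset.sum_eq_single_of_mem k0 (by simp [hk0])]
    · rw [Set.indicator_of_mem ((hmemk k0).mpr ⟨s0, hs0, hPhi0⟩)]
    · intro k hk hkne
      have hkpos : 0 < μ k := by simpa using (Finset.mem_filter.mp hk).2
      rw [Set.indicator_of_notMem]
      intro hmem
      obtain ⟨s, hs, hPhi⟩ := (hmemk k).mp hmem
      exact hkne (core_disjoint hμ0 hkpos hk0 hs hs0 (hPhi.trans hPhi0.symm))
  · rw [Set.indicator_of_notMem (fun hmem => ht ((mem_coneOf_iff A hA J x).mp hmem))]
    symm
    apply Finset.sum_eq_zero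
    intro k hk
    have hkpos : 0 < μ k := by simpa using (Finset.mem_filter.mp hk).2
    rw [Set.indicator_of_notMem]
    intro hmem
    obtain ⟨s, hs, hPhi⟩ := (hmemk k).mp hmem
    exact ht (hPhi ▸ core_fwd hμ0 hkpos hs)

theorem good {p : ℕ} : ∀ N : ℕ, ∀ A : Matrix (Fin p) (Fin p) ℤ, A.det ≠ 0 →
    A.det.natAbs ≤ N → ∀ J : Finset (Fin p),
    ∃ (n : ℕ) (B : Fin n → Matrix (Fin p) (Fin p) ℤ) (Js : Fin n → Finset (Fin p)),
      (∀ i, (B i).det = 1 ∨ (B i).det = -1) ∧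
      ∀ x : Fin p → ℝ,
        Set.indicator (coneOf A J) (fun _ => (1 : ℝ)) x =
          ∑ i, Set.indicator (coneOf (B i) (Js i)) (fun _ => (1 : ℝ)) x := by
  intro N
  induction N with
  | zero =>
    intro A hA h0 J
    exact absurd (Int.natAbs_eq_zero.mp (Nat.le_zero.mp h0)) hA
  | succ N ih =>
    intro A hA hle J
    by_cases hbase : A.det.natAbs ≤ 1
    · refine ⟨1, fun _ => A, fun _ => J, ?_, ?_⟩
      · intro _
        have h1 : A.det.natAbs = 1 := by
          have : A.det.natAbs ≠ 0 := fun h => hA (Int.natAbs_eq_zero.mp h)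
          omega
        exact Int.natAbs_eq_iff.mp h1
      · intro x
        rw [Fin.sum_univ_one]
    · push_neg at hbase
      obtain ⟨w, μ, hμ, hμ0, hμ1, hSex⟩ := exists_w A hA (by omega)
      classical
      have hAd : ((A.det : ℝ)) ≠ 0 := by exact_mod_cast hA
      have hdetk : ∀ k : Fin p, 0 < μ k →
          (A.updateCol k w).det ≠ 0 ∧ (A.updateCol k w).det.natAbs ≤ N := by
        intro k hk
        have hd : ((A.updateCol k w).det : ℝ) = μ k * (A.det : ℝ) := det_update A hμ k
        constructor
        · intro h
          have h0 : (0 : ℝ) = μ k * (A.det : ℝ) := by rw [← hd, h]; simp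
          rcases mul_eq_zero.mp h0.symm with h' | h'
          · exact absurd h' (ne_of_gt hk)
          · exact hAd h' 
        · have habs : ((A.updateCol k w).det.natAbs : ℝ) < (A.det.natAbs : ℝ) := by
            have e1 : ((A.updateCol k w).det.natAbs : ℝ) = |((A.updateCol k w).det : ℝ)| := by
              rw [Nat.cast_natAbs]; push_cast; ring
            have e2 : ((A.det.natAbs : ℝ)) = |(A.det : ℝ)| := by
              rw [Nat.cast_natAbs]; push_cast; ring
            rw [e1, e2, hd, abs_mul, abs_of_pos hk]
            have h3 : 0 < |(A.det : ℝ)| := abs_pos.mpr hAd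
            nlinarith [hμ1 k]
          have hlt : (A.updateCol k w).det.natAbs < A.det.natAbs := by exact_mod_cast habs
          omega
      set S : Finset (Fin p) := Finset.univ.filter (fun k => 0 < μ k) with hSdef
      have hmemS : ∀ k : Fin p, k ∈ S → 0 < μ k := by
        intro k hk; simpa [hSdef] using hk
      have H : ∀ k : {k : Fin p // k ∈ S},
          ∃ (n : ℕ) (B : Fin n → Matrix (Fin p) (Fin p) ℤ) (Js : Fin n → Finset (Fin p)),
          (∀ i, (B i).det = 1 ∨ (B i).det = -1) ∧
          ∀ x : Fin p → ℝ,
            Set.indicator (coneOf (A.updateCol k.1 w) (Jk J μ k.1)) (fun _ => (1 : ℝ)) x =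
              ∑ i, Set.indicator (coneOf (B i) (Js i)) (fun _ => (1 : ℝ)) x := by
        intro k
        exact ih _ (hdetk k.1 (hmemS k.1 k.2)).1 (hdetk k.1 (hmemS k.1 k.2)).2 (Jk J μ k.1)
      choose nf Bf Jsf hBdet hBid using H
      set σ := (Σ k : {k : Fin p // k ∈ S}, Fin (nf k)) with hσ
      set e : Fin (Fintype.card σ) ≃ σ := (Fintype.equivFin σ).symm with he
      refine ⟨Fintype.card σ, fun i => Bf (e i).1 (e i).2, fun i => Jsf (e i).1 (e i).2,
        fun i => hBdet (e i).1 (e i).2, ?_⟩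
      intro x
      rw [step A hA J hμ hμ0 hSex x]
      have h1 : ∑ i, Set.indicator (coneOf (Bf (e i).1 (e i).2) (Jsf (e i).1 (e i).2))
            (fun _ => (1 : ℝ)) x
          = ∑ z : σ, Set.indicator (coneOf (Bf z.1 z.2) (Jsf z.1 z.2)) (fun _ => (1 : ℝ)) x :=
        Equiv.sum_comp e (fun z : σ =>
          Set.indicator (coneOf (Bf z.1 z.2) (Jsf z.1 z.2)) (fun _ => (1 : ℝ)) x)
      have h2 : ∑ z : σ, Set.indicator (coneOf (Bf z.1 z.2) (Jsf z.1 z.2)) (fun _ => (1 : ℝ)) x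
          = ∑ k : {k : Fin p // k ∈ S}, ∑ j : Fin (nf k),
              Set.indicator (coneOf (Bf k j) (Jsf k j)) (fun _ => (1 : ℝ)) x := by
        rw [← Finset.univ_sigma_univ, Finset.sum_sigma]
      have h3 : ∑ k : {k : Fin p // k ∈ S}, ∑ j : Fin (nf k),
              Set.indicator (coneOf (Bf k j) (Jsf k j)) (fun _ => (1 : ℝ)) x
          = ∑ k : {k : Fin p // k ∈ S},
              Set.indicator (coneOf (A.updateCol k.1 w) (Jk J μ k.1)) (fun _ => (1 : ℝ)) x := by
        apply Finset.sum_congr rfl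
        intro k _
        exact (hBid k x).symm
      have h4 : ∑ k : {k : Fin p // k ∈ S},
              Set.indicator (coneOf (A.updateCol k.1 w) (Jk J μ k.1)) (fun _ => (1 : ℝ)) x
          = ∑ k ∈ S, Set.indicator (coneOf (A.updateCol k w) (Jk J μ k)) (fun _ => (1 : ℝ)) x :=
        Finset.sum_coe_sort S (fun k =>
          Set.indicator (coneOf (A.updateCol k w) (Jk J μ k)) (fun _ => (1 : ℝ)) x)
      rw [h1, h2, h3, h4]

end S18

theorem stmt18 (p : ℕ) (hp : 1 ≤ p) (A : Matrix (Fin p) (Fin p) ℤ)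
    (hA : A.det ≠ 0) (J : Finset (Fin p)) :
    ∃ (n : ℕ) (B : Fin n → Matrix (Fin p) (Fin p) ℤ)
      (Js : Fin n → Finset (Fin p)),
      (∀ i, (B i).det = 1 ∨ (B i).det = -1) ∧
      ∀ x : Fin p → ℝ,
        Set.indicator (coneOf A J) (fun _ => (1 : ℝ)) x =
          ∑ i, Set.indicator (coneOf (B i) (Js i)) (fun _ => (1 : ℝ)) x :=
  S18.good A.det.natAbs A hA le_rfl J
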